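/- Let $f_N$ be a polynomial of degree at most $2d_0$ in $\bar{x} \in \mathbb{R}^{n-1}$, let $\epsilon > 0$, let $g = (x_1,\ldots,x_{n-1}, 1 - e^T\bar{x})$, and consider the moment relaxation: minimize $\langle f_N, y \rangle + \epsilon \|y\|$ over $y \in \mathbb{R}^{\mathbb{N}^{n-1}_{2d_0}}$ subject to $y_0 = 1$, $M_{d_0}[y] \succeq 0$, and $L_{g_i}^{(d_0)}[y] \succeq 0$ for all $i$. If this relaxation has a global minimizer $y^*$ with $\mathrm{rank}\, M_{d_0}[y^*] = 1$, then the point $u = (y^*_{e_1}, \ldots, y^*_{e_{n-1}})$ is a global minimizer of the problem: minimize $f_N(\bar{x}) + \epsilon \|[\bar{x}]_{2d_0}\|$ over the simplex $\{\bar{x} \ge 0, 1 - e^T\bar{x} \ge 0\}$, and the two optimal values coincide. -/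

import Mathlib

noncomputable section

/-- Index set of monomial exponents of degree at most `d` in `n` variables. -/
def Idx (n d : ℕ) := {α : Fin n → Fin (d + 1) // ∑ i, (α i : ℕ) ≤ d}

instance (n d : ℕ) : Fintype (Idx n d) := by unfold Idx; infer_instance

/-- The moment matrix `M_d[y]`. -/
def momMat (n d : ℕ) (y : (Fin n → ℕ) → ℝ) : Matrix (Idx n d) (Idx n d) ℝ :=
  Matrix.of fun a b => y (fun i => (a.1 i : ℕ) + (b.1 i : ℕ))

/-- The monomial `u^α`. -/
def mono {n : ℕ} (u : Fin n → ℝ) (α : Fin n → ℕ) : ℝ := ∏ i, u i ^ α i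

/-- The localizing matrix of `g` with index degree at most `m`. -/
def locMat {n : ℕ} (g : MvPolynomial (Fin n) ℝ) (m : ℕ)
    (y : (Fin n → ℕ) → ℝ) : Matrix (Idx n m) (Idx n m) ℝ :=
  Matrix.of fun a b =>
    ∑ γ ∈ g.support, g.coeff γ * y (fun i => γ i + (a.1 i : ℕ) + (b.1 i : ℕ))

/-- The Riesz pairing `⟨f, y⟩ = ∑_α f_α y_α`. -/
def riesz {n : ℕ} (f : MvPolynomial (Fin n) ℝ) (y : (Fin n → ℕ) → ℝ) : ℝ :=
  ∑ γ ∈ f.support, f.coeff γ * y (fun i => γ i)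

/-- The Euclidean norm of the truncation of `y` to degree `d`. -/
def tmsNorm (n d : ℕ) (y : (Fin n → ℕ) → ℝ) : ℝ :=
  Real.sqrt (∑ a : Idx n d, (y (fun i => (a.1 i : ℕ))) ^ 2)

/-- Feasibility for the moment relaxation of the PSAA model over the simplex,
with constraints `g = (x₁, …, xₙ, 1 - eᵀx)`. -/
def Feas (n d0 : ℕ) (y : (Fin n → ℕ) → ℝ) : Prop :=
  y 0 = 1 ∧ (momMat n d0 y).PosSemidef ∧
  (∀ i : Fin n, (locMat (MvPolynomial.X i) (d0 - 1) y).PosSemidef) ∧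
  (locMat (1 - ∑ i : Fin n, MvPolynomial.X i) (d0 - 1) y).PosSemidef

/-! ### Auxiliary lemmas -/

open Matrix MvPolynomial

section Aux

variable {n : ℕ}

lemma psd_symm {N : Type*} [Fintype N] {M : Matrix N N ℝ} (h : M.PosSemidef) (a b : N) :
    M a b = M b a :=
  (congrFun (congrFun h.1.symm a) b).trans (by simp [conjTranspose_apply])

lemma psd_diag {N : Type*} [Fintype N] [DecidableEq N] {M : Matrix N N ℝ}
    (h : M.PosSemidef) (a : N) : 0 ≤ M a a := by
  have := h.dotProduct_mulVec_nonneg (Pi.single a 1)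
  simpa [mulVec_single_one, single_dotProduct] using this

lemma rank_one_mul {N : Type*} [Fintype N] [DecidableEq N] {M : Matrix N N ℝ}
    (hpsd : M.PosSemidef) (hrank : M.rank = 1) (a0 : N) (h0 : M a0 a0 = 1) (a b : N) :
    M a b = M a0 a * M a0 b := by
  classical
  set col0 : N → ℝ := M *ᵥ Pi.single a0 1 with hcol0
  have hmem0 : col0 ∈ LinearMap.range M.mulVecLin := ⟨Pi.single a0 1, rfl⟩
  have hne : col0 ≠ 0 := by
    intro h
    have : col0 a0 = 0 := by rw [h]; rfl
    simp only [hcol0, mulVec_single_one, col_apply, mul_one] at this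
    rw [h0] at this; norm_num at this
  have hle : Submodule.span ℝ {col0} ≤ LinearMap.range M.mulVecLin := by
    simpa [Submodule.span_singleton_le_iff_mem] using hmem0
  have hfr : Module.finrank ℝ (Submodule.span ℝ {col0}) = 1 := finrank_span_singleton hne
  have heq : Submodule.span ℝ {col0} = LinearMap.range M.mulVecLin := by
    apply Submodule.eq_of_le_of_finrank_le hle
    rw [hfr]
    exact le_of_eq hrank
  have hmemb : (M *ᵥ Pi.single b 1) ∈ Submodule.span ℝ {col0} := by
    rw [heq]; exact ⟨Pi.single b 1, rfl⟩
  obtain ⟨s, hs⟩ := Submodule.mem_span_singleton.mp hmemb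
  have hab : M a b = s * M a a0 := by
    have := congrFun hs a
    simpa [mulVec_single, hcol0] using this.symm
  have ha0b : M a0 b = s := by
    have := congrFun hs a0
    simp only [hcol0, mulVec_single_one, col_apply, mul_one, Pi.smul_apply, smul_eq_mul] at this
    rw [← this, h0, mul_one]
  rw [hab, ha0b, psd_symm hpsd a a0, mul_comm]

variable (Y : (Fin n → ℕ) → ℝ)

lemma riesz_congr_support {f : MvPolynomial (Fin n) ℝ} {s : Finset (Fin n →₀ ℕ)}
    (hs : f.support ⊆ s) : riesz f Y = ∑ γ ∈ s, f.coeff γ * Y (fun i => γ i) := by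
  refine Finset.sum_subset hs fun γ _ hγ => ?_
  rw [MvPolynomial.notMem_support_iff.mp hγ, zero_mul]

lemma riesz_add (p q : MvPolynomial (Fin n) ℝ) :
    riesz (p + q) Y = riesz p Y + riesz q Y := by
  classical
  rw [riesz_congr_support Y (s := p.support ∪ q.support) (MvPolynomial.support_add),
    riesz_congr_support Y (s := p.support ∪ q.support) Finset.subset_union_left,
    riesz_congr_support Y (s := p.support ∪ q.support) Finset.subset_union_right,
    ← Finset.sum_add_distrib]
  exact Finset.sum_congr rfl fun γ _ => by rw [MvPolynomial.coeff_add, add_mul]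

lemma riesz_neg (p : MvPolynomial (Fin n) ℝ) : riesz (-p) Y = -riesz p Y := by
  unfold riesz
  rw [MvPolynomial.support_neg, ← Finset.sum_neg_distrib]
  exact Finset.sum_congr rfl fun γ _ => by rw [MvPolynomial.coeff_neg, neg_mul]

lemma riesz_sub (p q : MvPolynomial (Fin n) ℝ) :
    riesz (p - q) Y = riesz p Y - riesz q Y := by
  rw [sub_eq_add_neg, riesz_add, riesz_neg, sub_eq_add_neg]

lemma riesz_one : riesz (1 : MvPolynomial (Fin n) ℝ) Y = Y (fun _ => 0) := by
  classical
  unfold riesz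
  rw [show (1 : MvPolynomial (Fin n) ℝ) = monomial 0 1 from rfl,
    MvPolynomial.support_monomial, if_neg (by norm_num)]
  simp

lemma riesz_X (i : Fin n) :
    riesz (X i : MvPolynomial (Fin n) ℝ) Y = Y (fun j => if j = i then 1 else 0) := by
  unfold riesz
  rw [MvPolynomial.support_X]
  simp only [Finset.sum_singleton, MvPolynomial.coeff_X, one_mul]
  rw [if_pos trivial, one_mul]
  congr 1
  funext j
  rw [Finsupp.single_apply]
  simp [eq_comm]

lemma riesz_finset_sum {ι : Type*} (s : Finset ι) (f : ι → MvPolynomial (Fin n) ℝ) :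
    riesz (∑ i ∈ s, f i) Y = ∑ i ∈ s, riesz (f i) Y := by
  classical
  induction s using Finset.induction_on with
  | empty => simp [riesz]
  | insert a s h ih => rw [Finset.sum_insert h, riesz_add, ih, Finset.sum_insert h]

lemma riesz_mono (f : MvPolynomial (Fin n) ℝ) (x : Fin n → ℝ) :
    riesz f (fun α => mono x α) = MvPolynomial.eval x f := by
  rw [MvPolynomial.eval_eq']
  exact Finset.sum_congr rfl fun γ _ => rfl

lemma mono_add (u : Fin n → ℝ) (α β : Fin n → ℕ) :
    mono u (fun i => α i + β i) = mono u α * mono u β := by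
  simp [mono, pow_add, Finset.prod_mul_distrib]

lemma mono_add3 (u : Fin n → ℝ) (α β δ : Fin n → ℕ) :
    mono u (fun i => α i + β i + δ i) = mono u α * mono u β * mono u δ := by
  simp [mono, pow_add, Finset.prod_mul_distrib]

lemma mono_e (u : Fin n → ℝ) (i : Fin n) :
    mono u (fun j => if j = i then 1 else 0) = u i := by
  simp [mono, pow_ite, Finset.prod_ite_eq' Finset.univ i]

lemma posSemidef_of_outer {N : Type*} [Fintype N] {M : Matrix N N ℝ} (c : ℝ) (hc : 0 ≤ c)
    (v : N → ℝ) (h : ∀ a b, M a b = c * (v a * v b)) : M.PosSemidef := by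
  refine Matrix.PosSemidef.of_dotProduct_mulVec_nonneg ?_ ?_
  · ext a b
    rw [conjTranspose_apply, h, h]
    simp [mul_comm]
  · intro x
    have : star x ⬝ᵥ (M *ᵥ x) = c * ((∑ a, v a * x a) * (∑ a, v a * x a)) := by
      simp only [star_trivial, dotProduct, mulVec, h, Finset.sum_mul, Finset.mul_sum]
      rw [Finset.sum_comm]
      exact Finset.sum_congr rfl fun a _ => Finset.sum_congr rfl fun b _ => by ring
    rw [this]
    exact mul_nonneg hc (mul_self_nonneg _)

lemma locMat_X_entry (i : Fin n) (m : ℕ) (y : (Fin n → ℕ) → ℝ) (a b : Idx n m) :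
    locMat (X i) m y a b
      = y (fun j => (if j = i then 1 else 0) + (a.1 j : ℕ) + (b.1 j : ℕ)) := by
  show riesz (X i) (fun δ => y (fun j => δ j + (a.1 j : ℕ) + (b.1 j : ℕ))) = _
  rw [riesz_X]

lemma locMat_simplex_entry (m : ℕ) (y : (Fin n → ℕ) → ℝ) (a b : Idx n m) :
    locMat (1 - ∑ i : Fin n, X i) m y a b
      = y (fun j => (a.1 j : ℕ) + (b.1 j : ℕ))
        - ∑ i, y (fun j => (if j = i then 1 else 0) + (a.1 j : ℕ) + (b.1 j : ℕ)) := by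
  show riesz (1 - ∑ i : Fin n, X i)
      (fun δ => y (fun j => δ j + (a.1 j : ℕ) + (b.1 j : ℕ))) = _
  rw [riesz_sub, riesz_one, riesz_finset_sum]
  congr 1
  · congr 1
    funext j
    simp
  · exact Finset.sum_congr rfl fun i _ => by rw [riesz_X]

/-- Auxiliary embedding into the index set. -/
def emb (d : ℕ) (α : Fin n → ℕ) (hα : ∑ i, α i ≤ d) : Idx n d :=
  ⟨fun i => ⟨α i, lt_of_le_of_lt
      (le_trans (Finset.single_le_sum (fun j _ => Nat.zero_le (α j)) (Finset.mem_univ i)) hα)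
      (Nat.lt_succ_self d)⟩,
    by simpa using hα⟩

lemma feas_mono (n d0 : ℕ) (x : Fin n → ℝ) (hx : ∀ i, 0 ≤ x i) (hx1 : ∑ i, x i ≤ 1) :
    Feas n d0 (fun α => mono x α) := by
  have hv : ∀ m : ℕ, ∀ a b : Idx n m,
      mono x (fun j => (a.1 j : ℕ) + (b.1 j : ℕ))
        = mono x (fun j => (a.1 j : ℕ)) * mono x (fun j => (b.1 j : ℕ)) := by
    intro m a b
    exact mono_add x _ _
  refine ⟨?_, ?_, ?_, ?_⟩
  · show mono x 0 = 1
    simp [mono]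
  · apply posSemidef_of_outer 1 zero_le_one (fun a : Idx n d0 => mono x (fun j => (a.1 j : ℕ)))
    intro a b
    rw [one_mul]
    exact hv d0 a b
  · intro i
    apply posSemidef_of_outer (x i) (hx i)
      (fun a : Idx n (d0 - 1) => mono x (fun j => (a.1 j : ℕ)))
    intro a b
    rw [locMat_X_entry, mono_add3, mono_e, mul_assoc]
  · apply posSemidef_of_outer (1 - ∑ i, x i) (by linarith)
      (fun a : Idx n (d0 - 1) => mono x (fun j => (a.1 j : ℕ)))
    intro a b
    rw [locMat_simplex_entry, hv]
    have hterm : ∀ i : Fin n,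
        mono x (fun j => (if j = i then 1 else 0) + (a.1 j : ℕ) + (b.1 j : ℕ))
          = x i * (mono x (fun j => (a.1 j : ℕ)) * mono x (fun j => (b.1 j : ℕ))) := by
      intro i
      rw [mono_add3, mono_e, mul_assoc]
    rw [Finset.sum_congr rfl fun i _ => hterm i, ← Finset.sum_mul]
    ring

end Aux

/-- if the moment relaxation of the PSAA model has a minimizer
`y*` whose moment matrix has rank one, then `u = (y*_{e₁},…)` is a global
minimizer of the PSAA problem on the simplex, with the same optimal value. -/
theorem stmt_9 (n d0 : ℕ) (hd0 : 1 ≤ d0)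
    (fN : MvPolynomial (Fin n) ℝ) (hdeg : fN.totalDegree ≤ 2 * d0)
    (ε : ℝ) (hε : 0 < ε)
    (ystar : (Fin n → ℕ) → ℝ)
    (hfeas : Feas n d0 ystar)
    (hmin : ∀ y : (Fin n → ℕ) → ℝ, Feas n d0 y →
      riesz fN ystar + ε * tmsNorm n (2 * d0) ystar ≤
        riesz fN y + ε * tmsNorm n (2 * d0) y)
    (hrank : (momMat n d0 ystar).rank = 1)
    (u : Fin n → ℝ)
    (hu : u = fun i => ystar (fun j => if j = i then 1 else 0)) :
    (∀ i, 0 ≤ u i) ∧ (∑ i, u i ≤ 1) ∧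
    (∀ x : Fin n → ℝ, (∀ i, 0 ≤ x i) → ∑ i, x i ≤ 1 →
      MvPolynomial.eval u fN + ε * tmsNorm n (2 * d0) (fun α => mono u α) ≤
        MvPolynomial.eval x fN + ε * tmsNorm n (2 * d0) (fun α => mono x α)) ∧
    riesz fN ystar + ε * tmsNorm n (2 * d0) ystar =
      MvPolynomial.eval u fN + ε * tmsNorm n (2 * d0) (fun α => mono u α) := by
  classical
  obtain ⟨hy0, hM, hloc, hloc2⟩ := hfeas
  have hui : ∀ i, u i = ystar (fun j => if j = i then 1 else 0) := fun i => by rw [hu]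
  -- zero index of `Idx n d0`
  set a0 : Idx n d0 := ⟨fun _ => 0, by simp⟩ with ha0def
  have hM00 : momMat n d0 ystar a0 a0 = 1 := by
    show ystar (fun i => ((a0.1 i : ℕ)) + ((a0.1 i : ℕ))) = 1
    rw [show (fun i => ((a0.1 i : ℕ)) + ((a0.1 i : ℕ))) = (0 : Fin n → ℕ) from
      funext fun i => by simp [ha0def], hy0]
  -- multiplicativity from rank one
  have key : ∀ α β : Fin n → ℕ, ∑ i, α i ≤ d0 → ∑ i, β i ≤ d0 →
      ystar (fun i => α i + β i) = ystar α * ystar β := by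
    intro α β hα hβ
    have h := rank_one_mul hM hrank a0 hM00 (emb d0 α hα) (emb d0 β hβ)
    have e1 : momMat n d0 ystar (emb d0 α hα) (emb d0 β hβ) = ystar (fun i => α i + β i) := by
      show ystar _ = _
      congr 1
    have e2 : momMat n d0 ystar a0 (emb d0 α hα) = ystar α := by
      show ystar _ = _
      congr 1
      funext i
      simp [ha0def, emb]
    have e3 : momMat n d0 ystar a0 (emb d0 β hβ) = ystar β := by
      show ystar _ = _
      congr 1
      funext i
      simp [ha0def, emb]
    rw [← e1, h, e2, e3]
  -- ystar agrees with moments of u up to degree d0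
  have ymono : ∀ k, ∀ α : Fin n → ℕ, ∑ i, α i = k → k ≤ d0 → ystar α = mono u α := by
    intro k
    induction k using Nat.strong_induction_on with
    | _ k ih =>
      intro α hsum hk
      rcases Nat.eq_zero_or_pos k with h0 | hpos
      · subst h0
        have hall : ∀ i ∈ Finset.univ, α i = 0 := Finset.sum_eq_zero_iff.mp hsum
        have hα : α = (0 : Fin n → ℕ) := funext fun i => hall i (Finset.mem_univ i)
        rw [hα, hy0]
        simp [mono]
      · obtain ⟨i, hi⟩ : ∃ i, 0 < α i := by
          by_contra hc
          push_neg at hc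
          have : ∑ i, α i = 0 := Finset.sum_eq_zero fun i _ => Nat.le_zero.mp (hc i)
          omega
        set α' := Function.update α i (α i - 1) with hα'def
        have hhalt : α i + ∑ j ∈ Finset.univ.erase i, α j = k := by
          rw [Finset.add_sum_erase _ _ (Finset.mem_univ i)]; exact hsum
        have hsum' : ∑ j, α' j = k - 1 := by
          rw [hα'def, Finset.sum_update_of_mem (Finset.mem_univ i),
            Finset.sdiff_singleton_eq_erase]
          omega
        have hcomb : α = fun j => (if j = i then 1 else 0) + α' j := by
          funext j
          by_cases hj : j = i
          · subst hj
            simp only [eq_self_iff_true, if_true, hα'def, Function.update_self]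
            omega
          · simp [hα'def, Function.update_of_ne hj, hj]
        have hesum : ∑ j, (if j = i then 1 else 0 : ℕ) = 1 := by
          simp [Finset.sum_ite_eq' Finset.univ i]
        rw [hcomb, key _ _ (by omega) (by omega), mono_add]
        congr 1
        · rw [mono_e]
          exact (hui i).symm
        · exact ih (k - 1) (by omega) α' hsum' (by omega)
  -- splitting a degree ≤ 2d0 exponent into two halves
  have split : ∀ k, ∀ γ : Fin n → ℕ, ∑ i, γ i = k → k ≤ 2 * d0 →
      ∃ α β : Fin n → ℕ, (γ = fun i => α i + β i) ∧ ∑ i, α i ≤ d0 ∧ ∑ i, β i ≤ d0 := by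
    intro k
    induction k using Nat.strong_induction_on with
    | _ k ih =>
      intro γ hsum hk
      by_cases hc : k ≤ d0
      · exact ⟨γ, fun _ => 0, funext fun i => by simp, by omega, by simp⟩
      · obtain ⟨i, hi⟩ : ∃ i, 0 < γ i := by
          by_contra hcon
          push_neg at hcon
          have : ∑ i, γ i = 0 := Finset.sum_eq_zero fun i _ => Nat.le_zero.mp (hcon i)
          omega
        set γ' := Function.update γ i (γ i - 1) with hγ'def
        have hait : γ i + ∑ j ∈ Finset.univ.erase i, γ j = k := by
          rw [Finset.add_sum_erase _ _ (Finset.mem_univ i)]; exact hsum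
        have hsum' : ∑ j, γ' j = k - 1 := by
          rw [hγ'def, Finset.sum_update_of_mem (Finset.mem_univ i),
            Finset.sdiff_singleton_eq_erase]
          omega
        obtain ⟨α, β, hαβ, hα, hβ⟩ := ih (k - 1) (by omega) γ' hsum' (by omega)
        have habsum : ∑ j, α j + ∑ j, β j = k - 1 := by
          rw [← Finset.sum_add_distrib, ← hsum']
          exact (Finset.sum_congr rfl fun j _ => (congrFun hαβ j)).symm
        have hgi : γ i - 1 = α i + β i := by
          have := congrFun hαβ i
          simpa [hγ'def, Function.update_self] using this
        have hgj : ∀ j, j ≠ i → γ j = α j + β j := by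
          intro j hj
          have := congrFun hαβ j
          simpa [hγ'def, Function.update_of_ne hj] using this
        rcases le_or_gt (∑ j, α j) (d0 - 1) with hA | hA
        · refine ⟨Function.update α i (α i + 1), β, ?_, ?_, hβ⟩
          · funext j
            by_cases hj : j = i
            · subst hj
              simp only [Function.update_self]
              omega
            · rw [Function.update_of_ne hj]
              exact hgj j hj
          · have : α i + ∑ j ∈ Finset.univ.erase i, α j = ∑ j, α j := by
              rw [Finset.add_sum_erase _ _ (Finset.mem_univ i)]
            rw [Finset.sum_update_of_mem (Finset.mem_univ i),
              Finset.sdiff_singleton_eq_erase]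
            omega
        · have hB : ∑ j, β j ≤ d0 - 1 := by omega
          refine ⟨α, Function.update β i (β i + 1), ?_, hα, ?_⟩
          · funext j
            by_cases hj : j = i
            · subst hj
              simp only [Function.update_self]
              omega
            · rw [Function.update_of_ne hj]
              exact hgj j hj
          · have : β i + ∑ j ∈ Finset.univ.erase i, β j = ∑ j, β j := by
              rw [Finset.add_sum_erase _ _ (Finset.mem_univ i)]
            rw [Finset.sum_update_of_mem (Finset.mem_univ i),
              Finset.sdiff_singleton_eq_erase]
            omega
  -- ystar agrees with moments of u up to degree 2d0
  have y2 : ∀ γ : Fin n → ℕ, ∑ i, γ i ≤ 2 * d0 → ystar γ = mono u γ := by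
    intro γ hγ
    obtain ⟨α, β, hcomb, hα, hβ⟩ := split (∑ i, γ i) γ rfl hγ
    rw [hcomb, key α β hα hβ, mono_add, ymono _ α rfl hα, ymono _ β rfl hβ]
  -- the zero index of Idx n (d0 - 1)
  set z0 : Idx n (d0 - 1) := ⟨fun _ => 0, by simp⟩ with hz0def
  -- u lies in the simplex
  have hun : ∀ i, 0 ≤ u i := by
    intro i
    have h := psd_diag (hloc i) z0
    rw [locMat_X_entry] at h
    have he : (fun j => (if j = i then 1 else 0) + ((z0.1 j : ℕ)) + ((z0.1 j : ℕ)))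
        = fun j => if j = i then 1 else 0 := by
      funext j
      simp [hz0def]
    rw [he, ← hui i] at h
    exact h
  have husum : ∑ i, u i ≤ 1 := by
    have h := psd_diag hloc2 z0
    rw [locMat_simplex_entry] at h
    have h1 : (fun j => ((z0.1 j : ℕ)) + ((z0.1 j : ℕ))) = (0 : Fin n → ℕ) := by
      funext j
      simp [hz0def]
    have h2 : ∀ i : Fin n, (fun j => (if j = i then 1 else 0) + ((z0.1 j : ℕ)) + ((z0.1 j : ℕ)))
        = fun j => if j = i then 1 else 0 := by
      intro i
      funext j
      simp [hz0def]
    rw [h1, hy0, Finset.sum_congr rfl fun i _ => by rw [h2 i]] at h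
    have : ∑ i, ystar (fun j => if j = i then 1 else 0) = ∑ i, u i :=
      Finset.sum_congr rfl fun i _ => (hui i).symm
    rw [this] at h
    linarith
  -- the objective values agree
  have hreq : riesz fN ystar = MvPolynomial.eval u fN := by
    rw [MvPolynomial.eval_eq']
    refine Finset.sum_congr rfl fun γ hγ => ?_
    congr 1
    have hdγ : ∑ i, γ i ≤ 2 * d0 := by
      have h1 : (γ.sum fun _ e => e) ≤ fN.totalDegree := MvPolynomial.le_totalDegree hγ
      have h2 : (γ.sum fun _ e => e) = ∑ i, γ i := Finsupp.sum_fintype γ _ fun _ => rfl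
      omega
    rw [y2 _ hdγ]
    rfl
  have hnorm : tmsNorm n (2 * d0) ystar = tmsNorm n (2 * d0) (fun α => mono u α) := by
    unfold tmsNorm
    congr 1
    refine Finset.sum_congr rfl fun a _ => ?_
    rw [y2 _ a.2]
  refine ⟨hun, husum, ?_, by rw [hreq, hnorm]⟩
  intro x hx hx1
  have h := hmin (fun α => mono x α) (feas_mono n d0 x hx hx1)
  rw [riesz_mono, hreq, hnorm] at h
  exact h
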